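/- For every p with 1/3 < p < 0.34 (more generally 1/d < p < 0.34 for some integer d ≥ 3), h_p((1-p)/p) ≥ (1-p)/p, where h_p(x) = 2H_p(px) + (p/(1-p))H_p(p^2 x) and H_p(z) = ∑_{l≥1} Φ_p(l)^2 z^l. -/

import Mathlib

set_option maxHeartbeats 1000000


noncomputable def Phi (p : ℝ) (l : ℕ) : ℝ :=
  ∏ k ∈ Finset.Icc 1 l, (1 - p) / (1 - p + p ^ (k + 1))

noncomputable def H (p : ℝ) (z : ℝ) : ℝ :=
  ∑' l : ℕ, Phi p (l + 1) ^ 2 * z ^ (l + 1)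

noncomputable def h (p : ℝ) (x : ℝ) : ℝ :=
  2 * H p (p * x) + (p / (1 - p)) * H p (p ^ 2 * x)

lemma one_sub_sum_le_prod_aux (f : ℕ → ℝ) (s : Finset ℕ)
    (h0 : ∀ i ∈ s, 0 ≤ f i) (h1 : ∀ i ∈ s, f i ≤ 1) :
    1 - ∑ i ∈ s, f i ≤ ∏ i ∈ s, (1 - f i) := by
  induction s using Finset.cons_induction with
  | empty => simp
  | cons a s ha ih =>
    rw [Finset.prod_cons, Finset.sum_cons]
    have h0' : ∀ i ∈ s, 0 ≤ f i := fun i hi => h0 i (Finset.mem_cons_of_mem hi)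
    have h1' : ∀ i ∈ s, f i ≤ 1 := fun i hi => h1 i (Finset.mem_cons_of_mem hi)
    have hP : (0:ℝ) ≤ ∏ i ∈ s, (1 - f i) :=
      Finset.prod_nonneg fun i hi => by linarith [h1' i hi]
    have hS : (0:ℝ) ≤ ∑ i ∈ s, f i := Finset.sum_nonneg h0'
    have ha0 := h0 a (Finset.mem_cons_self a s)
    have ha1 := h1 a (Finset.mem_cons_self a s)
    have hih := ih h0' h1'
    nlinarith [mul_le_mul_of_nonneg_left hih (by linarith : (0:ℝ) ≤ 1 - f a),
      mul_nonneg ha0 hS]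

lemma geom_sum_Icc (p : ℝ) (hp1 : p ≠ 1) (l : ℕ) :
    ∑ k ∈ Finset.Icc 1 l, p ^ (k + 1) = (p ^ 2 - p ^ (l + 2)) / (1 - p) := by
  induction l with
  | zero => simp
  | succ n ih =>
    rw [Finset.sum_Icc_succ_top (by omega), ih]
    have h1p : 1 - p ≠ 0 := by intro hc; apply hp1; linarith
    field_simp
    ring

lemma Phi_le_one (p : ℝ) (hp0 : 0 < p) (hp1 : p < 1) (l : ℕ) : Phi p l ≤ 1 := by
  apply Finset.prod_le_one
  · intro k _
    have hb := pow_pos hp0 (k + 1)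
    exact div_nonneg (by linarith) (by linarith)
  · intro k _
    have hb := pow_pos hp0 (k + 1)
    rw [div_le_one (by linarith)]
    linarith

lemma Phi_nonneg (p : ℝ) (hp0 : 0 < p) (hp1 : p < 1) (l : ℕ) : 0 ≤ Phi p l := by
  apply Finset.prod_nonneg
  intro k _
  have hb := pow_pos hp0 (k + 1)
  exact div_nonneg (by linarith) (by linarith)

lemma Phi_ge (p : ℝ) (hp0 : 0 < p) (hp34 : p < 0.34) (l : ℕ) :
    1 - p ^ 2 / (1 - p) ^ 2 ≤ Phi p l := by
  have h1p : (0.66 : ℝ) < 1 - p := by linarith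
  have h1p0 : (0 : ℝ) < 1 - p := by linarith
  -- each factor is at least 1 - p^(k+1)/(1-p)
  have hfac : ∀ k ∈ Finset.Icc 1 l,
      1 - p ^ (k + 1) / (1 - p) ≤ (1 - p) / (1 - p + p ^ (k + 1)) := by
    intro k _
    have hb : 0 < p ^ (k + 1) := pow_pos hp0 _
    obtain ⟨u, hu⟩ : ∃ u, p ^ (k + 1) = u * (1 - p) :=
      ⟨p ^ (k + 1) / (1 - p), (div_mul_cancel₀ _ h1p0.ne').symm⟩
    have hu0 : 0 ≤ u := by nlinarith
    have huq : p ^ (k + 1) / (1 - p) = u := by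
      rw [hu, mul_div_assoc, div_self h1p0.ne', mul_one]
    rw [huq, hu, le_div_iff₀ (by nlinarith)]
    nlinarith [sq_nonneg u]
  have hterm0 : ∀ k ∈ Finset.Icc 1 l, 0 ≤ p ^ (k + 1) / (1 - p) := by
    intro k _
    exact div_nonneg (pow_pos hp0 _).le h1p0.le
  have hterm1 : ∀ k ∈ Finset.Icc 1 l, p ^ (k + 1) / (1 - p) ≤ 1 := by
    intro k hk
    rw [div_le_one h1p0]
    have hk1 : 2 ≤ k + 1 := by
      simp only [Finset.mem_Icc] at hk; omega
    have : p ^ (k + 1) ≤ p ^ 2 := pow_le_pow_of_le_one hp0.le (by linarith) hk1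
    nlinarith
  have step1 : ∏ k ∈ Finset.Icc 1 l, (1 - p ^ (k + 1) / (1 - p)) ≤ Phi p l := by
    apply Finset.prod_le_prod
    · intro k hk
      linarith [hterm1 k hk]
    · exact hfac
  have step2 : 1 - ∑ k ∈ Finset.Icc 1 l, p ^ (k + 1) / (1 - p)
      ≤ ∏ k ∈ Finset.Icc 1 l, (1 - p ^ (k + 1) / (1 - p)) :=
    one_sub_sum_le_prod_aux _ _ hterm0 hterm1
  have step3 : ∑ k ∈ Finset.Icc 1 l, p ^ (k + 1) / (1 - p) ≤ p ^ 2 / (1 - p) ^ 2 := by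
    rw [← Finset.sum_div, geom_sum_Icc p (by linarith) l, div_div,
      div_le_div_iff₀ (by nlinarith) (by nlinarith : (0:ℝ) < (1 - p) ^ 2)]
    have hpow : 0 ≤ p ^ (l + 2) := by positivity
    nlinarith [mul_nonneg hpow (sq_nonneg (1 - p))]
  linarith

theorem stmt_10 (d : ℕ) (hd : 3 ≤ d) (p : ℝ) (hp : 1 / (d : ℝ) < p)
    (hp34 : p < 0.34) :
    h p ((1 - p) / p) ≥ (1 - p) / p := by
  have hd3 : (3 : ℝ) ≤ (d : ℝ) := by exact_mod_cast hd
  have hdpos : (0 : ℝ) < (d : ℝ) := by linarith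
  have hp0 : 0 < p := lt_trans (by positivity) hp
  have h1p : (0.66 : ℝ) < 1 - p := by linarith
  have h1p0 : (0 : ℝ) < 1 - p := by linarith
  have hp1 : p < 1 := by linarith
  set c : ℝ := 1 - p ^ 2 / (1 - p) ^ 2 with hc
  have ht : p ^ 2 / (1 - p) ^ 2 ≤ 289 / 1089 := by
    rw [div_le_div_iff₀ (by nlinarith : (0:ℝ) < (1 - p) ^ 2) (by norm_num)]
    have h33 : 33 * p ≤ 17 * (1 - p) := by linarith
    nlinarith [mul_le_mul h33 h33 (by linarith) (by linarith)]
  have ht0 : 0 ≤ p ^ 2 / (1 - p) ^ 2 := div_nonneg (sq_nonneg _) (sq_nonneg _)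
  have hc0 : 0 < c := by rw [hc]; nlinarith
  have h2c : 1 ≤ 2 * c ^ 2 := by
    rw [hc]
    nlinarith [mul_nonneg (sub_nonneg.2 ht)
      (show (0:ℝ) ≤ 4 - 2 * (p ^ 2 / (1 - p) ^ 2 + 289 / 1089) by linarith)]
  -- arguments of H
  have hx1 : p * ((1 - p) / p) = 1 - p := by field_simp
  have hx2 : p ^ 2 * ((1 - p) / p) = p * (1 - p) := by field_simp
  -- summability facts
  have hz0 : (0 : ℝ) ≤ 1 - p := h1p0.le
  have hz1 : 1 - p < 1 := by linarith
  have hgeo : Summable (fun l : ℕ => (1 - p) ^ l) := summable_geometric_of_lt_one hz0 hz1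
  have hf_le : ∀ l : ℕ, Phi p (l + 1) ^ 2 * (1 - p) ^ (l + 1) ≤ (1 - p) ^ l := by
    intro l
    have h1 : Phi p (l + 1) ^ 2 ≤ 1 := by
      nlinarith [Phi_le_one p hp0 hp1 (l + 1), Phi_nonneg p hp0 hp1 (l + 1)]
    have h2 : (1 - p) ^ (l + 1) ≤ (1 - p) ^ l :=
      pow_le_pow_of_le_one hz0 hz1.le (by omega)
    have h3 : (0 : ℝ) ≤ (1 - p) ^ (l + 1) := pow_nonneg hz0 _
    nlinarith
  have hf_nonneg : ∀ l : ℕ, 0 ≤ Phi p (l + 1) ^ 2 * (1 - p) ^ (l + 1) := by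
    intro l
    exact mul_nonneg (sq_nonneg _) (pow_nonneg hz0 _)
  have hf_sum : Summable (fun l : ℕ => Phi p (l + 1) ^ 2 * (1 - p) ^ (l + 1)) :=
    Summable.of_nonneg_of_le hf_nonneg hf_le hgeo
  have hg_eq : ∀ l : ℕ, c ^ 2 * (1 - p) ^ (l + 1) = (c ^ 2 * (1 - p)) * (1 - p) ^ l := by
    intro l; ring
  have hg_sum : Summable (fun l : ℕ => c ^ 2 * (1 - p) ^ (l + 1)) := by
    simp only [hg_eq]
    exact hgeo.mul_left _
  -- lower bound on H p (1-p)
  have hH1 : c ^ 2 * (1 - p) / p ≤ H p (1 - p) := by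
    have hle : ∀ l : ℕ, c ^ 2 * (1 - p) ^ (l + 1) ≤ Phi p (l + 1) ^ 2 * (1 - p) ^ (l + 1) := by
      intro l
      have hPhi' : c ≤ Phi p (l + 1) := Phi_ge p hp0 hp34 (l + 1)
      have hcx : c ^ 2 ≤ Phi p (l + 1) ^ 2 := pow_le_pow_left₀ hc0.le hPhi' 2
      exact mul_le_mul_of_nonneg_right hcx (pow_nonneg hz0 _)
    have hts : ∑' l : ℕ, c ^ 2 * (1 - p) ^ (l + 1) = c ^ 2 * (1 - p) / p := by
      simp only [hg_eq]
      rw [tsum_mul_left, tsum_geometric_of_lt_one hz0 hz1]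
      have hpp : 1 - (1 - p) = p := by ring
      rw [hpp, div_eq_mul_inv]
    calc c ^ 2 * (1 - p) / p = ∑' l : ℕ, c ^ 2 * (1 - p) ^ (l + 1) := hts.symm
      _ ≤ ∑' l : ℕ, Phi p (l + 1) ^ 2 * (1 - p) ^ (l + 1) := Summable.tsum_le_tsum hle hg_sum hf_sum
      _ = H p (1 - p) := rfl
  -- nonnegativity of H p (p*(1-p))
  have hH2 : 0 ≤ H p (p * (1 - p)) := by
    apply tsum_nonneg
    intro l
    exact mul_nonneg (sq_nonneg _) (pow_nonneg (mul_nonneg hp0.le hz0) _)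
  -- conclude
  have hhp : h p ((1 - p) / p) = 2 * H p (1 - p) + (p / (1 - p)) * H p (p * (1 - p)) := by
    rw [h, hx1, hx2]
  rw [ge_iff_le, hhp]
  have hw : 0 ≤ p / (1 - p) := div_nonneg hp0.le hz0
  have hmain : (1 - p) / p ≤ 2 * (c ^ 2 * (1 - p) / p) := by
    have heq : 2 * (c ^ 2 * (1 - p) / p) = (2 * c ^ 2 * (1 - p)) / p := by ring
    rw [heq, div_le_div_iff₀ hp0 hp0]
    nlinarith [mul_le_mul_of_nonneg_right h2c (mul_nonneg hz0 hp0.le)]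
  nlinarith [mul_nonneg hw hH2, hH1, hmain]
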